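/- For every real μ ≥ 0 and every real r > 0, the improper integral ∫_{-∞}^{∞} e^{-r² e^{2s}} e^{-μ² e^{-2s}/4 + s} ds converges and (2/√π) · ∫_{-∞}^{∞} e^{-r² e^{2s}} e^{-μ² e^{-2s}/4 + s} ds = e^{-μ r} / r. -/

import Mathlib

open Real MeasureTheory Set

-- substitution t = exp s
lemma exp_subst (g : ℝ → ℝ) :
    (∫ t in Ioi (0:ℝ), g t) = ∫ s : ℝ, Real.exp s * g (Real.exp s) := by
  have h := integral_image_eq_integral_abs_deriv_smul (f := Real.exp)
      (f' := Real.exp) MeasurableSet.univ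
      (fun x _ => (Real.hasDerivAt_exp x).hasDerivWithinAt) Real.exp_injective.injOn g
  rw [Set.image_univ, Real.range_exp] at h
  rw [h]
  simp [Real.abs_exp, smul_eq_mul]

lemma exp_subst_int (g : ℝ → ℝ) :
    IntegrableOn g (Ioi (0:ℝ)) ↔ Integrable (fun s : ℝ => Real.exp s * g (Real.exp s)) := by
  have h := integrableOn_image_iff_integrableOn_abs_deriv_smul (f := Real.exp)
      (f' := Real.exp) MeasurableSet.univ
      (fun x _ => (Real.hasDerivAt_exp x).hasDerivWithinAt) Real.exp_injective.injOn g
  rw [Set.image_univ, Real.range_exp] at h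
  simpa [IntegrableOn, Real.abs_exp, smul_eq_mul] using h

set_option maxHeartbeats 1000000 in
lemma key (r b : ℝ) (hr : 0 < r) (hb : 0 < b) :
    IntegrableOn (fun t => Real.exp (-(r*t - b/t)^2)) (Ioi (0:ℝ)) ∧
    ∫ t in Ioi (0:ℝ), Real.exp (-(r*t - b/t)^2) = Real.sqrt π / (2*r) := by
  set φ : ℝ → ℝ := fun t => r*t - b/t with hφ
  have hφderiv : ∀ t ∈ Ioi (0:ℝ), HasDerivWithinAt φ (r + b/t^2) (Ioi 0) t := by
    intro t ht
    have ht0 : t ≠ 0 := (mem_Ioi.mp ht).ne'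
    have h1 : HasDerivAt φ (r * 1 - b * (-(t^2)⁻¹)) t := by
      simpa [hφ, div_eq_mul_inv, Pi.sub_def] using
        ((hasDerivAt_id t).const_mul r).sub ((hasDerivAt_inv ht0).const_mul b)
    have : r * 1 - b * (-(t^2)⁻¹) = r + b/t^2 := by field_simp; ring
    exact (this ▸ h1).hasDerivWithinAt
  have hφinj : InjOn φ (Ioi (0:ℝ)) := by
    intro x hx y hy h
    simp only [hφ] at h
    rw [mem_Ioi] at hx hy
    have h' : (x - y) * (r*x*y + b) = 0 := by
      field_simp at h; nlinarith [h]
    have : r*x*y + b > 0 := by positivity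
    have := mul_eq_zero.mp h'
    rcases this with h1 | h1
    · linarith
    · linarith
  have hφsurj : φ '' Ioi (0:ℝ) = univ := by
    ext u
    simp only [mem_image, mem_univ, iff_true, mem_Ioi]
    set s := Real.sqrt (u^2 + 4*r*b) with hs
    have hs2 : s^2 = u^2 + 4*r*b := Real.sq_sqrt (by positivity)
    have hsu : |u| < s := by
      rw [← Real.sqrt_sq_eq_abs]
      exact Real.sqrt_lt_sqrt (sq_nonneg u) (by nlinarith)
    have hus : 0 < u + s := by
      have := neg_abs_le u; linarith
    have ht : (0:ℝ) < (u+s)/(2*r) := by positivity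
    refine ⟨(u+s)/(2*r), ht, ?_⟩
    simp only [hφ]
    rw [div_div_eq_mul_div]
    field_simp
    nlinarith [hs2]
  -- integrability of exp(-(φ t)^2) on Ioi 0
  have hint : IntegrableOn (fun t => Real.exp (-(φ t)^2)) (Ioi (0:ℝ)) := by
    apply Integrable.mono' (g := fun t => Real.exp (2*r*b) * Real.exp (-(r^2) * t^2))
        (((integrable_exp_neg_mul_sq (by positivity : (0:ℝ) < r^2)).const_mul _).integrableOn)
    · exact (Real.measurable_exp.comp
        ((((measurable_id.const_mul r).sub (measurable_const.div measurable_id)).pow_const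
          2).neg)).aestronglyMeasurable
    · filter_upwards [ae_restrict_mem measurableSet_Ioi] with t ht
      rw [mem_Ioi] at ht
      have ht0 : t ≠ 0 := ht.ne'
      have h1 : (r*t - b/t)^2 = r^2*t^2 - 2*(r*b) + (b/t)^2 := by field_simp; ring
      rw [Real.norm_eq_abs, abs_of_pos (Real.exp_pos _), ← Real.exp_add]
      apply Real.exp_le_exp.mpr
      simp only [hφ]
      nlinarith [sq_nonneg (b/t)]
  -- the ψ substitution : J = ∫ (b/(r t^2)) exp(-(φ t)^2)
  set ψ : ℝ → ℝ := fun t => b/(r*t) with hψ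
  have hψderiv : ∀ t ∈ Ioi (0:ℝ), HasDerivWithinAt ψ (-(b/(r*t^2))) (Ioi 0) t := by
    intro t ht
    have ht0 : t ≠ 0 := (mem_Ioi.mp ht).ne'
    have h1 : HasDerivAt ψ ((b/r) * (-(t^2)⁻¹)) t := by
      have : ψ = fun t => (b/r) * t⁻¹ := by funext x; simp [hψ]; ring
      rw [this]
      exact (hasDerivAt_inv ht0).const_mul _
    have : (b/r) * (-(t^2)⁻¹) = -(b/(r*t^2)) := by field_simp
    exact (this ▸ h1).hasDerivWithinAt
  have hψinj : InjOn ψ (Ioi (0:ℝ)) := by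
    intro x hx y hy h
    simp only [hψ] at h
    rw [mem_Ioi] at hx hy
    rw [div_eq_div_iff (by positivity) (by positivity)] at h
    have h3 := mul_left_cancel₀ hr.ne' (mul_left_cancel₀ hb.ne' h)
    exact h3.symm
  have hψimg : ψ '' Ioi (0:ℝ) = Ioi 0 := by
    ext u
    simp only [mem_image, mem_Ioi]
    constructor
    · rintro ⟨x, hx, rfl⟩; simp only [hψ]; positivity
    · intro hu
      refine ⟨b/(r*u), by positivity, ?_⟩
      simp only [hψ]
      field_simp
  have hB := integral_image_eq_integral_abs_deriv_smul measurableSet_Ioi hψderiv hψinj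
      (fun u => Real.exp (-(φ u)^2))
  rw [hψimg] at hB
  have hψpt : ∀ t ∈ Ioi (0:ℝ), |(-(b/(r*t^2)))| • Real.exp (-(φ (ψ t))^2)
      = (b/(r*t^2)) * Real.exp (-(φ t)^2) := by
    intro t ht
    rw [mem_Ioi] at ht
    have ht0 : t ≠ 0 := ht.ne'
    have h1 : |(-(b/(r*t^2)))| = b/(r*t^2) := by
      rw [abs_neg, abs_of_pos (by positivity)]
    have h2 : φ (ψ t) = -(φ t) := by
      simp only [hφ, hψ]; field_simp; ring
    rw [h1, h2, smul_eq_mul, neg_sq]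
  have hB' : (∫ t in Ioi (0:ℝ), Real.exp (-(φ t)^2))
      = ∫ t in Ioi (0:ℝ), (b/(r*t^2)) * Real.exp (-(φ t)^2) := by
    rw [hB]; exact setIntegral_congr_fun measurableSet_Ioi hψpt
  -- integrability of (b/(r t^2)) * exp(-(φ t)^2)
  have hint2 : IntegrableOn (fun t => (b/(r*t^2)) * Real.exp (-(φ t)^2)) (Ioi (0:ℝ)) := by
    have h := (integrableOn_image_iff_integrableOn_abs_deriv_smul measurableSet_Ioi
        hψderiv hψinj (fun u => Real.exp (-(φ u)^2))).mp (by rwa [hψimg])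
    exact (h.congr_fun hψpt measurableSet_Ioi)
  -- the φ substitution : √π = ∫ (r + b/t^2) exp(-(φ t)^2)
  have hA := integral_image_eq_integral_abs_deriv_smul measurableSet_Ioi hφderiv hφinj
      (fun u => Real.exp (-u^2))
  rw [hφsurj] at hA
  have hgauss : (∫ x in (univ : Set ℝ), Real.exp (-x^2)) = Real.sqrt π := by
    rw [Measure.restrict_univ]
    simpa using integral_gaussian 1
  rw [hgauss] at hA
  have hApt : ∀ t ∈ Ioi (0:ℝ), |r + b/t^2| • Real.exp (-(φ t)^2)
      = r * Real.exp (-(φ t)^2) + (r * ((b/(r*t^2)) * Real.exp (-(φ t)^2))) := by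
    intro t ht
    rw [mem_Ioi] at ht
    rw [abs_of_pos (by positivity), smul_eq_mul]
    field_simp
  have hsplit : Real.sqrt π = 2 * r * ∫ t in Ioi (0:ℝ), Real.exp (-(φ t)^2) := by
    rw [hA, setIntegral_congr_fun measurableSet_Ioi hApt,
      integral_add (hint.const_mul r) (hint2.const_mul r),
      integral_const_mul, integral_const_mul, ← hB']
    ring
  constructor
  · exact hint
  · rw [hsplit, mul_div_cancel_left₀ _ (by positivity : (2:ℝ)*r ≠ 0)]

/-- For `μ ≥ 0` and `r > 0`, the integral
`∫ₛ e^{-r² e^{2s}} e^{-μ² e^{-2s}/4 + s} ds` over the real line converges and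
`(2/√π) ∫ₛ e^{-r² e^{2s}} e^{-μ² e^{-2s}/4 + s} ds = e^{-μ r}/r`. -/
theorem integral_repr_helmholtz_kernel (μ r : ℝ) (hμ : 0 ≤ μ) (hr : 0 < r) :
    MeasureTheory.Integrable
        (fun s : ℝ =>
          Real.exp (-r ^ 2 * Real.exp (2 * s)) *
            Real.exp (-μ ^ 2 * Real.exp (-2 * s) / 4 + s)) ∧
      (2 / Real.sqrt π) *
          ∫ s : ℝ, Real.exp (-r ^ 2 * Real.exp (2 * s)) *
            Real.exp (-μ ^ 2 * Real.exp (-2 * s) / 4 + s) =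
        Real.exp (-μ * r) / r := by
  set g : ℝ → ℝ := fun t => Real.exp (-r^2 * t^2) * Real.exp (-μ^2 / (4 * t^2)) with hg
  -- pointwise identification of the integrand
  have hpt : ∀ s : ℝ, Real.exp s * g (Real.exp s)
      = Real.exp (-r ^ 2 * Real.exp (2 * s)) *
          Real.exp (-μ ^ 2 * Real.exp (-2 * s) / 4 + s) := by
    intro s
    have hE : (0:ℝ) < Real.exp s := Real.exp_pos s
    have h2 : Real.exp (2*s) = (Real.exp s)^2 := by rw [two_mul, Real.exp_add, sq]
    have h2' : Real.exp (-2*s) = ((Real.exp s)^2)⁻¹ := by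
      rw [neg_mul, Real.exp_neg, h2]
    rw [Real.exp_add, h2, h2', hg]
    have harg : -μ^2 * ((Real.exp s)^2)⁻¹ / 4 = -μ^2 / (4 * (Real.exp s)^2) := by
      rw [div_eq_mul_inv, div_eq_mul_inv, mul_inv]; ring
    rw [harg]; ring
  -- integrability and value of ∫ g on Ioi 0
  have hmain : IntegrableOn g (Ioi (0:ℝ)) ∧
      (∫ t in Ioi (0:ℝ), g t) = Real.exp (-μ*r) * (Real.sqrt π / (2*r)) := by
    rcases eq_or_lt_of_le hμ with hμ0 | hμpos
    · -- μ = 0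
      subst hμ0
      have hEq : EqOn g (fun t => Real.exp (-(r^2) * t^2)) (Ioi 0) := by
        intro t _; simp [hg]
      constructor
      · exact ((integrable_exp_neg_mul_sq (by positivity : (0:ℝ) < r^2)).integrableOn).congr_fun
          hEq.symm measurableSet_Ioi
      · rw [setIntegral_congr_fun measurableSet_Ioi hEq, integral_gaussian_Ioi,
          Real.sqrt_div pi_pos.le, Real.sqrt_sq hr.le,
          show (-(0:ℝ)*r) = 0 by ring, Real.exp_zero]
        ring
    · -- μ > 0
      have hb : (0:ℝ) < μ/2 := by linarith
      obtain ⟨hint, hval⟩ := key r (μ/2) hr hb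
      have hEq : EqOn g (fun t => Real.exp (-μ*r) * Real.exp (-(r*t - (μ/2)/t)^2)) (Ioi 0) := by
        intro t ht
        rw [mem_Ioi] at ht
        have ht0 : t ≠ 0 := ht.ne'
        simp only [hg, ← Real.exp_add]
        congr 1
        field_simp
        ring
      constructor
      · have h5 : IntegrableOn
            (fun t => Real.exp (-μ*r) * Real.exp (-(r*t - (μ/2)/t)^2)) (Ioi (0:ℝ)) :=
          hint.const_mul _
        exact h5.congr_fun hEq.symm measurableSet_Ioi
      · rw [setIntegral_congr_fun measurableSet_Ioi hEq, integral_const_mul, hval]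
  obtain ⟨hI, hV⟩ := hmain
  have hIexp : Integrable (fun s : ℝ => Real.exp s * g (Real.exp s)) := (exp_subst_int g).mp hI
  have hfuneq : (fun s : ℝ => Real.exp s * g (Real.exp s))
      = fun s : ℝ => Real.exp (-r ^ 2 * Real.exp (2 * s)) *
          Real.exp (-μ ^ 2 * Real.exp (-2 * s) / 4 + s) := funext hpt
  constructor
  · rwa [hfuneq] at hIexp
  · have : (∫ s : ℝ, Real.exp (-r ^ 2 * Real.exp (2 * s)) *
        Real.exp (-μ ^ 2 * Real.exp (-2 * s) / 4 + s))
        = Real.exp (-μ*r) * (Real.sqrt π / (2*r)) := by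
      rw [← hfuneq, ← exp_subst g, hV]
    rw [this]
    have hπ : Real.sqrt π ≠ 0 := by positivity
    field_simp
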